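/- There exists a constant C > 0, depending only on Θ, N and the partition θ₁ < ⋯ < θ_N, such that for every twice continuously differentiable function u on [0,1] × [0,Θ], the interpolant Πu satisfies ‖Πu‖²_{L²_r(Q)} + ‖∂_r Πu‖²_{L²_r(Q)} + ‖∂_θ Πu‖²_{L²_{1/r}(Q)} ≤ C ( ‖u‖²_{L²_r(Q)} + ‖∂_r u‖²_{L²_r(Q)} + ‖∂_θ u‖²_{L²_{1/r}(Q)} + ‖∂_{rθ} u‖²_{L²_r(Q)} ), where the inequality holds in [0,∞]; in particular, if the right-hand side is finite then Πu, ∂_r Πu have finite L²_r(Q)-norm and ∂_θ Πu has finite L²_{1/r}(Q)-norm. -/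

import Mathlib

open MeasureTheory Set Real intervalIntegral

set_option maxHeartbeats 2000000

/-- Squared weighted norm `‖v‖²_{L²_r(Q)} = ∫₀¹ ∫₀^Θ v(r,θ)² r dθ dr`, valued in `[0,∞]`. -/
noncomputable def wL2r (Θ : ℝ) (v : ℝ × ℝ → ℝ) : ENNReal :=
  ∫⁻ r in Ioo (0:ℝ) 1, ∫⁻ θ in Ioo (0:ℝ) Θ, ENNReal.ofReal ((v (r, θ)) ^ 2 * r)

/-- Squared weighted norm `‖v‖²_{L²_{1/r}(Q)} = ∫₀¹ ∫₀^Θ v(r,θ)² (1/r) dθ dr`. -/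
noncomputable def wL2invr (Θ : ℝ) (v : ℝ × ℝ → ℝ) : ENNReal :=
  ∫⁻ r in Ioo (0:ℝ) 1, ∫⁻ θ in Ioo (0:ℝ) Θ, ENNReal.ofReal ((v (r, θ)) ^ 2 / r)

/-- Partial derivative with respect to the first (radial) variable. -/
noncomputable def pd1 (u : ℝ × ℝ → ℝ) (p : ℝ × ℝ) : ℝ := deriv (fun s => u (s, p.2)) p.1

/-- Partial derivative with respect to the second (angular) variable. -/
noncomputable def pd2 (u : ℝ × ℝ → ℝ) (p : ℝ × ℝ) : ℝ := deriv (fun t => u (p.1, t)) p.2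

/-- The interpolant `(Πu)(r,θ) = Σ_i u(r, θ_i) e_i(θ)`. -/
noncomputable def interp (N : ℕ) (t : ℕ → ℝ) (e : ℕ → ℝ → ℝ) (u : ℝ × ℝ → ℝ) :
    ℝ × ℝ → ℝ :=
  fun p => ∑ i ∈ Finset.range N, u (p.1, t i) * e i p.2



-- convex square bound
lemma convex_sq_bound (x y l : ℝ) (h0 : 0 ≤ l) (h1 : l ≤ 1) :
    (x * (1 - l) + y * l) ^ 2 ≤ x ^ 2 + y ^ 2 := by
  nlinarith [mul_nonneg (mul_nonneg h0 (by linarith : (0:ℝ) ≤ 1 - l)) (sq_nonneg (x - y)),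
    sq_nonneg x, sq_nonneg y, mul_nonneg h0 (sq_nonneg y), mul_nonneg (by linarith : (0:ℝ) ≤ 1 - l) (sq_nonneg x)]

-- Cauchy-Schwarz
lemma sq_setIntegral_le {a b : ℝ} (hab : a < b) {g : ℝ → ℝ}
    (h1 : IntegrableOn g (Ioo a b)) (h2 : IntegrableOn (fun x => g x ^ 2) (Ioo a b)) :
    (∫ x in Ioo a b, g x) ^ 2 ≤ (b - a) * ∫ x in Ioo a b, g x ^ 2 := by
  set c : ℝ := (∫ x in Ioo a b, g x) / (b - a) with hc
  have hba : (0:ℝ) < b - a := by linarith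
  have hm : (volume (Ioo a b)).toReal = b - a := by
    rw [Real.volume_Ioo, ENNReal.toReal_ofReal hba.le]
  have key : (0:ℝ) ≤ ∫ x in Ioo a b, (g x - c) ^ 2 :=
    integral_nonneg fun x => sq_nonneg _
  have expand : ∫ x in Ioo a b, (g x - c) ^ 2
      = (∫ x in Ioo a b, g x ^ 2) - 2 * c * (∫ x in Ioo a b, g x) + (b - a) * c ^ 2 := by
    have : ∀ x, (g x - c) ^ 2 = g x ^ 2 - (2 * c) * g x + c ^ 2 := by intro x; ring
    simp_rw [this]
    have hsub : IntegrableOn (fun x => g x ^ 2 - 2 * c * g x) (Ioo a b) := by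
      exact h2.sub (h1.const_mul (2*c))
    have hcst : IntegrableOn (fun _ : ℝ => c ^ 2) (Ioo a b) := by
      exact integrableOn_const (by simp [Real.volume_Ioo])
    rw [integral_add hsub hcst, integral_sub h2 (h1.const_mul (2*c)),
      MeasureTheory.integral_const_mul, setIntegral_const, measureReal_def, hm, smul_eq_mul]
  rw [expand] at key
  have : 2 * c * (∫ x in Ioo a b, g x) = 2 * ((∫ x in Ioo a b, g x) ^ 2 / (b - a)) := by
    rw [hc]; field_simp
  have h2' : (b - a) * c ^ 2 = (∫ x in Ioo a b, g x) ^ 2 / (b - a) := by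
    rw [hc]; field_simp
  rw [this, h2'] at key
  have hle : (∫ x in Ioo a b, g x) ^ 2 / (b - a) ≤ ∫ x in Ioo a b, g x ^ 2 := by linarith
  have := (div_le_iff₀ hba).1 hle
  linarith [this]



lemma bddIntOn {T M : ℝ} {f : ℝ → ℝ} (hm : Measurable f)
    (hb : ∀ x ∈ Ioo (0:ℝ) T, |f x| ≤ M) : IntegrableOn f (Ioo (0:ℝ) T) := by
  refine ⟨hm.aestronglyMeasurable, ?_⟩
  refine HasFiniteIntegral.restrict_of_bounded (C := M) measure_Ioo_lt_top ?_
  exact (ae_restrict_mem measurableSet_Ioo).mono fun x hx => by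
    simpa [Real.norm_eq_abs] using hb x hx

lemma bddIntOn_sq {T M : ℝ} {f : ℝ → ℝ} (hm : Measurable f)
    (hb : ∀ x ∈ Ioo (0:ℝ) T, |f x| ≤ M) :
    IntegrableOn (fun x => f x ^ 2) (Ioo (0:ℝ) T) := by
  refine bddIntOn (hm.pow_const 2) (M := M ^ 2) fun x hx => ?_
  rw [abs_of_nonneg (sq_nonneg _), ← sq_abs]
  exact pow_le_pow_left₀ (abs_nonneg _) (hb x hx) 2


-- FTC on a subinterval with one-sided info
lemma ftc_diff {T a b : ℝ} {f f' : ℝ → ℝ} (h0a : 0 ≤ a) (hab : a ≤ b) (hbT : b ≤ T)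
    (hc : ContinuousOn f (Icc 0 T))
    (hd : ∀ x ∈ Ioo 0 T, HasDerivAt f (f' x) x)
    (hint : IntegrableOn f' (Ioo 0 T)) :
    f b - f a = ∫ x in Ioo a b, f' x := by
  have hsub : Icc a b ⊆ Icc 0 T := Icc_subset_Icc h0a hbT
  have hIoo : Ioo a b ⊆ Ioo 0 T := Ioo_subset_Ioo h0a hbT
  have hii : IntervalIntegrable f' volume a b := by
    rw [intervalIntegrable_iff_integrableOn_Ioo_of_le hab]
    exact hint.mono_set hIoo
  have := integral_eq_sub_of_hasDeriv_right_of_le hab (hc.mono hsub)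
    (fun x hx => (hd x (hIoo hx)).hasDerivWithinAt) hii
  rw [← this, integral_of_le hab, integral_Ioc_eq_integral_Ioo]

/-- 1D trace inequality. -/
lemma trace_ineq {T : ℝ} (hT : 0 < T) {f f' : ℝ → ℝ}
    (hc : ContinuousOn f (Icc 0 T))
    (hd : ∀ x ∈ Ioo 0 T, HasDerivAt f (f' x) x)
    (hm : Measurable f') {M : ℝ} (hb : ∀ x ∈ Ioo 0 T, |f' x| ≤ M)
    {a : ℝ} (ha : a ∈ Icc 0 T) :
    f a ^ 2 ≤ (1 / T + 1) * ((∫ x in Ioo 0 T, f x ^ 2) + ∫ x in Ioo 0 T, f' x ^ 2) := by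
  -- integrability facts
  have hfsq : IntegrableOn (fun x => f x ^ 2) (Ioo 0 T) :=
    ((hc.pow 2).integrableOn_Icc).mono_set Ioo_subset_Icc_self
  have hf'm : AEStronglyMeasurable f' (volume.restrict (Ioo 0 T)) :=
    hm.aestronglyMeasurable
  have hMnn : 0 ≤ M := le_trans (abs_nonneg _) (hb (T/2) ⟨by linarith, by linarith⟩)
  have hf'int : IntegrableOn f' (Ioo 0 T) := by
    refine ⟨hf'm, ?_⟩
    refine HasFiniteIntegral.restrict_of_bounded (C := M) (measure_Ioo_lt_top) ?_
    exact (ae_restrict_mem measurableSet_Ioo).mono fun x hx => by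
      simpa [Real.norm_eq_abs] using hb x hx
  have hf'sq : IntegrableOn (fun x => f' x ^ 2) (Ioo 0 T) := by
    refine ⟨((hm.pow_const 2).aestronglyMeasurable), ?_⟩
    refine HasFiniteIntegral.restrict_of_bounded (C := M ^ 2) (measure_Ioo_lt_top) ?_
    exact (ae_restrict_mem measurableSet_Ioo).mono fun x hx => by
      have := hb x hx
      have : f' x ^ 2 ≤ M ^ 2 := by nlinarith [abs_nonneg (f' x), sq_abs (f' x)]
      simpa [Real.norm_eq_abs, abs_of_nonneg (sq_nonneg (f' x))] using this
  -- bound for f on the interval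
  obtain ⟨Mf, hMf⟩ : ∃ C, ∀ x ∈ Icc (0:ℝ) T, ‖f x‖ ≤ C :=
    (isCompact_Icc.exists_bound_of_continuousOn hc)
  -- product integrand
  have hprod : IntegrableOn (fun x => 2 * f x * f' x) (Ioo 0 T) := by
    refine ⟨(((hc.mono Ioo_subset_Icc_self).aestronglyMeasurable
      measurableSet_Ioo).const_mul 2).mul hf'm, ?_⟩
    refine HasFiniteIntegral.restrict_of_bounded (C := 2 * Mf * M) (measure_Ioo_lt_top) ?_
    refine (ae_restrict_mem measurableSet_Ioo).mono fun x hx => ?_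
    have h1 := hMf x (Ioo_subset_Icc_self hx)
    have h2 := hb x hx
    have hMfnn : 0 ≤ Mf := le_trans (norm_nonneg _) h1
    rw [Real.norm_eq_abs, abs_mul, abs_mul, abs_two]
    rw [Real.norm_eq_abs] at h1
    calc 2 * |f x| * |f' x| ≤ 2 * Mf * |f' x| := by nlinarith [abs_nonneg (f' x)]
      _ ≤ 2 * Mf * M := by nlinarith
  -- min point
  obtain ⟨y, hy, hymin'⟩ := isCompact_Icc.exists_isMinOn (nonempty_Icc.2 hT.le)
    (hc.pow 2)
  have hymin : ∀ x ∈ Icc (0:ℝ) T, f y ^ 2 ≤ f x ^ 2 := fun x hx => hymin' hx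
  -- Θ f(y)² ≤ ∫ f²
  have hmean : T * f y ^ 2 ≤ ∫ x in Ioo 0 T, f x ^ 2 := by
    have : ∫ (_ : ℝ) in Ioo 0 T, f y ^ 2 = T * f y ^ 2 := by
      rw [setIntegral_const, measureReal_def, Real.volume_Ioo, smul_eq_mul, sub_zero,
        ENNReal.toReal_ofReal hT.le]
    rw [← this]
    exact setIntegral_mono_on (integrableOn_const (by simp [Real.volume_Ioo]))
      hfsq measurableSet_Ioo (fun x hx => hymin x (Ioo_subset_Icc_self hx))
  -- FTC between y and a
  have hF' : ∀ x ∈ Ioo 0 T, HasDerivAt (fun z => f z ^ 2) (2 * f x * f' x) x := by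
    intro x hx
    have := (hd x hx).fun_pow 2
    simpa [mul_comm] using this
  have hcF : ContinuousOn (fun z => f z ^ 2) (Icc 0 T) := hc.pow 2
  have habs : ∀ p q : ℝ, p ∈ Icc (0:ℝ) T → q ∈ Icc (0:ℝ) T → p ≤ q →
      |f q ^ 2 - f p ^ 2| ≤ (∫ x in Ioo 0 T, f x ^ 2) + ∫ x in Ioo 0 T, f' x ^ 2 := by
    intro p q hp hq hpq
    have hftc := ftc_diff hp.1 hpq hq.2 hcF hF' hprod
    have mono1 : |∫ x in Ioo p q, 2 * f x * f' x| ≤ ∫ x in Ioo 0 T, |2 * f x * f' x| := by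
      calc |∫ x in Ioo p q, 2 * f x * f' x| ≤ ∫ x in Ioo p q, |2 * f x * f' x| := by
            simpa only [Real.norm_eq_abs] using
              MeasureTheory.norm_integral_le_integral_norm (μ := volume.restrict (Ioo p q))
                (f := fun x => 2 * f x * f' x)
        _ ≤ ∫ x in Ioo 0 T, |2 * f x * f' x| :=
            setIntegral_mono_set hprod.abs
              ((ae_restrict_mem measurableSet_Ioo).mono fun x _ => abs_nonneg _)
              ((Ioo_subset_Ioo hp.1 hq.2).eventuallyLE)
    have mono2 : ∫ x in Ioo 0 T, |2 * f x * f' x|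
        ≤ ∫ x in Ioo 0 T, (f x ^ 2 + f' x ^ 2) := by
      refine integral_mono hprod.abs (hfsq.add hf'sq) (fun x => ?_)
      have := sq_nonneg (|f x| - |f' x|)
      rw [abs_mul, abs_mul, abs_two]
      nlinarith [sq_abs (f x), sq_abs (f' x)]
    have := integral_add hfsq hf'sq
    calc |f q ^ 2 - f p ^ 2| = |∫ x in Ioo p q, 2 * f x * f' x| := by
          rw [show f q ^ 2 - f p ^ 2 = ∫ x in Ioo p q, 2 * f x * f' x by simpa using hftc]
      _ ≤ (∫ x in Ioo 0 T, f x ^ 2) + ∫ x in Ioo 0 T, f' x ^ 2 := by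
          rw [← integral_add hfsq hf'sq]; exact le_trans mono1 mono2
  -- conclude
  have hfa : f a ^ 2 ≤ f y ^ 2 + ((∫ x in Ioo 0 T, f x ^ 2) + ∫ x in Ioo 0 T, f' x ^ 2) := by
    rcases le_total y a with h | h
    · have := habs y a hy ha h
      have := abs_le.1 this
      linarith [this.2]
    · have := abs_le.1 (habs a y ha hy h)
      linarith [this.1]
  have h1T : 0 < 1 / T := by positivity
  have hint1 : 0 ≤ ∫ x in Ioo 0 T, f x ^ 2 := integral_nonneg fun x => sq_nonneg _
  have hint2 : 0 ≤ ∫ x in Ioo 0 T, f' x ^ 2 := integral_nonneg fun x => sq_nonneg _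
  have hy2 : f y ^ 2 ≤ (1 / T) * ∫ x in Ioo 0 T, f x ^ 2 := by
    calc f y ^ 2 = (1/T) * (T * f y ^ 2) := by field_simp
      _ ≤ (1/T) * ∫ x in Ioo 0 T, f x ^ 2 := by
          apply mul_le_mul_of_nonneg_left hmean h1T.le
  calc f a ^ 2 ≤ f y ^ 2 + ((∫ x in Ioo 0 T, f x ^ 2) + ∫ x in Ioo 0 T, f' x ^ 2) := hfa
    _ ≤ (1/T) * ((∫ x in Ioo 0 T, f x ^ 2) + ∫ x in Ioo 0 T, f' x ^ 2)
        + ((∫ x in Ioo 0 T, f x ^ 2) + ∫ x in Ioo 0 T, f' x ^ 2) := by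
        have : (1/T) * ∫ x in Ioo 0 T, f x ^ 2 ≤ (1/T) * ((∫ x in Ioo 0 T, f x ^ 2) + ∫ x in Ioo 0 T, f' x ^ 2) := by
          apply mul_le_mul_of_nonneg_left (by linarith) h1T.le
        linarith
    _ = (1 / T + 1) * ((∫ x in Ioo 0 T, f x ^ 2) + ∫ x in Ioo 0 T, f' x ^ 2) := by ring

section part
variable {N : ℕ} {t : ℕ → ℝ} {e : ℕ → ℝ → ℝ} {T : ℝ}

lemma tmono_lt (htmono : ∀ j, j + 1 < N → t j < t (j + 1)) :
    ∀ i j, i < j → j < N → t i < t j := by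
  intro i j hij hjN
  induction j with
  | zero => omega
  | succ k ih =>
    rcases Nat.lt_succ_iff_lt_or_eq.1 hij with h | h
    · exact lt_trans (ih h (by omega)) (htmono k hjN)
    · subst h; exact htmono i hjN

lemma exists_seg (hN : 2 ≤ N) (ht0 : t 0 = 0) (htN : t (N - 1) = T)
    (htmono : ∀ j, j + 1 < N → t j < t (j + 1))
    {θ : ℝ} (hθ : θ ∈ Ioo (0:ℝ) T) (hnd : ∀ k < N, t k ≠ θ) :
    ∃ j, j + 1 < N ∧ t j < θ ∧ θ < t (j + 1) := by
  classical
  set s := (Finset.range N).filter (fun k => t k < θ) with hs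
  have h0s : 0 ∈ s := by
    simp [hs, ht0, hθ.1, Finset.mem_filter]; omega
  have hne : s.Nonempty := ⟨0, h0s⟩
  set j := s.max' hne with hj
  have hjs : j ∈ s := s.max'_mem hne
  have hjN : j < N := (Finset.mem_filter.1 hjs).2 |> fun _ => (Finset.mem_range.1 (Finset.mem_filter.1 hjs).1)
  have hjθ : t j < θ := (Finset.mem_filter.1 hjs).2
  have hjne : j ≠ N - 1 := by
    intro h
    rw [h, htN] at hjθ
    exact absurd hθ.2 (not_lt.2 hjθ.le)
  have hj1N : j + 1 < N := by omega
  refine ⟨j, hj1N, hjθ, ?_⟩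
  rcases lt_trichotomy (t (j+1)) θ with h | h | h
  · have : j + 1 ∈ s := by simp [hs, Finset.mem_filter, Finset.mem_range]; exact ⟨by omega, h⟩
    have := s.le_max' _ this
    omega
  · exact absurd h (hnd (j+1) hj1N)
  · exact h

lemma sum_eval (hN : 2 ≤ N)
    (hnode : ∀ i < N, ∀ j < N, e i (t j) = if i = j then 1 else 0)
    (hlin : ∀ i < N, ∀ j, j + 1 < N → ∀ x ∈ Icc (t j) (t (j + 1)),
      e i x = e i (t j) + (e i (t (j + 1)) - e i (t j)) * (x - t j) / (t (j + 1) - t j))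
    {j : ℕ} (hj1 : j + 1 < N) {θ : ℝ} (hθ : θ ∈ Icc (t j) (t (j+1))) (a : ℕ → ℝ) :
    ∑ i ∈ Finset.range N, a i * e i θ
      = a j * (1 - (θ - t j) / (t (j+1) - t j)) + a (j+1) * ((θ - t j) / (t (j+1) - t j)) := by
  classical
  set l := (θ - t j) / (t (j+1) - t j) with hl
  have hjN : j < N := by omega
  have key : ∀ i ∈ Finset.range N, a i * e i θ
      = (if i = j then a j * (1 - l) else 0) + (if i = j + 1 then a (j+1) * l else 0) := by
    intro i hi
    have hiN : i < N := Finset.mem_range.1 hi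
    have hei : e i θ = e i (t j) + (e i (t (j + 1)) - e i (t j)) * (θ - t j) / (t (j + 1) - t j) :=
      hlin i hiN j hj1 θ hθ
    rw [hnode i hiN j hjN, hnode i hiN (j+1) hj1] at hei
    by_cases h1 : i = j
    · subst h1
      have h2 : i ≠ i + 1 := by omega
      simp only [if_pos rfl, if_neg h2, if_true, eq_self_iff_true] at hei ⊢
      rw [hei, hl]; ring
    · by_cases h2 : i = j + 1
      · subst h2
        have h3 : j + 1 ≠ j := by omega
        simp only [if_neg h3, if_pos rfl, if_true, eq_self_iff_true] at hei ⊢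
        rw [hei, hl]; ring
      · simp only [if_neg h1, if_neg h2] at hei ⊢
        rw [hei]; ring
  rw [Finset.sum_congr rfl key, Finset.sum_add_distrib,
    Finset.sum_ite_eq' (Finset.range N) j, Finset.sum_ite_eq' (Finset.range N) (j+1),
    if_pos (Finset.mem_range.2 hjN), if_pos (Finset.mem_range.2 hj1)]

end part

section calculus
variable {T : ℝ} {u : ℝ × ℝ → ℝ}

lemma slice1 (hu : ContDiffOn ℝ 2 u (Icc (0:ℝ) 1 ×ˢ Icc (0:ℝ) T))
    {r θ : ℝ} (hr : r ∈ Ioo (0:ℝ) 1) (hθ : θ ∈ Icc (0:ℝ) T) :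
    HasDerivAt (fun s => u (s, θ))
      ((fderivWithin ℝ u (Icc (0:ℝ) 1 ×ˢ Icc (0:ℝ) T) (r, θ)) (1, 0)) r := by
  set S := Icc (0:ℝ) 1 ×ˢ Icc (0:ℝ) T with hS
  have hmem : (r, θ) ∈ S := ⟨⟨hr.1.le, hr.2.le⟩, hθ⟩
  have hdw : DifferentiableWithinAt ℝ u S (r, θ) :=
    (hu.differentiableOn (by norm_num)) _ hmem
  have hF : HasFDerivWithinAt u (fderivWithin ℝ u S (r, θ)) S (r, θ) := hdw.hasFDerivWithinAt
  have hγ : HasDerivAt (fun s : ℝ => (s, θ)) ((1:ℝ), (0:ℝ)) r :=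
    (hasDerivAt_id' r).prodMk (hasDerivAt_const r θ)
  have hmaps : MapsTo (fun s : ℝ => (s, θ)) (Icc 0 1) S := fun s hs => ⟨hs, hθ⟩
  have := hF.comp_hasDerivWithinAt r (hγ.hasDerivWithinAt) hmaps
  exact (this.hasDerivAt (Icc_mem_nhds hr.1 hr.2) : HasDerivAt (u ∘ fun s : ℝ => (s, θ)) _ r)

lemma slice2 (hu : ContDiffOn ℝ 2 u (Icc (0:ℝ) 1 ×ˢ Icc (0:ℝ) T))
    {r θ : ℝ} (hr : r ∈ Icc (0:ℝ) 1) (hθ : θ ∈ Ioo (0:ℝ) T) :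
    HasDerivAt (fun t => u (r, t))
      ((fderivWithin ℝ u (Icc (0:ℝ) 1 ×ˢ Icc (0:ℝ) T) (r, θ)) (0, 1)) θ := by
  set S := Icc (0:ℝ) 1 ×ˢ Icc (0:ℝ) T with hS
  have hmem : (r, θ) ∈ S := ⟨hr, ⟨hθ.1.le, hθ.2.le⟩⟩
  have hdw : DifferentiableWithinAt ℝ u S (r, θ) :=
    (hu.differentiableOn (by norm_num)) _ hmem
  have hF : HasFDerivWithinAt u (fderivWithin ℝ u S (r, θ)) S (r, θ) := hdw.hasFDerivWithinAt
  have hγ : HasDerivAt (fun t : ℝ => (r, t)) ((0:ℝ), (1:ℝ)) θ :=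
    (hasDerivAt_const θ r).prodMk (hasDerivAt_id' θ)
  have hmaps : MapsTo (fun t : ℝ => (r, t)) (Icc 0 T) S := fun s hs => ⟨hr, hs⟩
  have := hF.comp_hasDerivWithinAt θ (hγ.hasDerivWithinAt) hmaps
  exact (this.hasDerivAt (Icc_mem_nhds hθ.1 hθ.2) : HasDerivAt (u ∘ fun t : ℝ => (r, t)) _ θ)

-- derivative in θ of the first-partial slice
lemma slice12 (hT : 0 < T) (hu : ContDiffOn ℝ 2 u (Icc (0:ℝ) 1 ×ˢ Icc (0:ℝ) T))
    {r θ : ℝ} (hr : r ∈ Icc (0:ℝ) 1) (hθ : θ ∈ Ioo (0:ℝ) T) :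
    HasDerivAt (fun t => (fderivWithin ℝ u (Icc (0:ℝ) 1 ×ˢ Icc (0:ℝ) T) (r, t)) (1, 0))
      ((((fderivWithin ℝ (fderivWithin ℝ u (Icc (0:ℝ) 1 ×ˢ Icc (0:ℝ) T))
          (Icc (0:ℝ) 1 ×ˢ Icc (0:ℝ) T) (r, θ)) (0, 1)) (1, 0)) ) θ := by
  set S := Icc (0:ℝ) 1 ×ˢ Icc (0:ℝ) T with hS
  have hSu : UniqueDiffOn ℝ S := (uniqueDiffOn_Icc one_pos).prod (uniqueDiffOn_Icc hT)
  have hmem : (r, θ) ∈ S := ⟨hr, ⟨hθ.1.le, hθ.2.le⟩⟩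
  have hf1 : ContDiffOn ℝ 1 (fderivWithin ℝ u S) S := hu.fderivWithin hSu (by norm_num)
  have hdw : DifferentiableWithinAt ℝ (fderivWithin ℝ u S) S (r, θ) :=
    (hf1.differentiableOn (by norm_num)) _ hmem
  have hF : HasFDerivWithinAt (fderivWithin ℝ u S)
      (fderivWithin ℝ (fderivWithin ℝ u S) S (r, θ)) S (r, θ) := hdw.hasFDerivWithinAt
  have hγ : HasDerivAt (fun t : ℝ => (r, t)) ((0:ℝ), (1:ℝ)) θ :=
    (hasDerivAt_const θ r).prodMk (hasDerivAt_id' θ)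
  have hmaps : MapsTo (fun t : ℝ => (r, t)) (Icc 0 T) S := fun s hs => ⟨hr, hs⟩
  have h1 := (hF.comp_hasDerivWithinAt θ (hγ.hasDerivWithinAt) hmaps).hasDerivAt
    (Icc_mem_nhds hθ.1 hθ.2)
  -- apply evaluation CLM at (1,0)
  have := ((ContinuousLinearMap.apply ℝ ℝ ((1:ℝ),(0:ℝ))).hasFDerivAt.comp_hasDerivAt θ h1)
  simpa [Function.comp_def] using this

end calculus

lemma aemeas_inner {T : ℝ} (hT : 0 < T) {g v : ℝ × ℝ → ℝ}
    (hg : ContinuousOn g (Icc (0:ℝ) 1 ×ˢ Icc (0:ℝ) T))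
    (hagree : ∀ p ∈ (Ioo (0:ℝ) 1) ×ˢ (Ioo (0:ℝ) T), v p = g p) :
    AEMeasurable (fun r => ∫⁻ θ in Ioo (0:ℝ) T, ENNReal.ofReal ((v (r,θ))^2 * r))
      (volume.restrict (Ioo (0:ℝ) 1)) := by
  set proj : ℝ × ℝ → ℝ × ℝ := fun p => (min (max p.1 0) 1, min (max p.2 0) T) with hproj
  have hprojc : Continuous proj := by
    apply Continuous.prodMk
    · exact (continuous_fst.max continuous_const).min continuous_const
    · exact (continuous_snd.max continuous_const).min continuous_const
  have hmaps : ∀ p, proj p ∈ Icc (0:ℝ) 1 ×ˢ Icc (0:ℝ) T := by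
    intro p
    constructor
    · exact ⟨le_min (le_max_right _ _) zero_le_one, min_le_right _ _⟩
    · exact ⟨le_min (le_max_right _ _) hT.le, min_le_right _ _⟩
  have hG : Measurable fun p : ℝ × ℝ => ENNReal.ofReal ((g (proj p))^2 * p.1) := by
    apply Measurable.ennreal_ofReal
    exact (((hg.comp_continuous hprojc hmaps).pow 2).mul continuous_fst).measurable
  have hA' : Measurable fun r : ℝ => ∫⁻ θ in Ioo (0:ℝ) T,
      ENNReal.ofReal ((g (proj (r,θ)))^2 * r) := by
    exact hG.lintegral_prod_right' (ν := volume.restrict (Ioo (0:ℝ) T))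
  refine hA'.aemeasurable.congr ?_
  filter_upwards [ae_restrict_mem measurableSet_Ioo] with r hr
  refine setLIntegral_congr_fun measurableSet_Ioo (fun θ hθ => ?_)
  have hp : proj (r, θ) = (r, θ) := by
    simp only [hproj]
    rw [max_eq_left hr.1.le, min_eq_left hr.2.le, max_eq_left hθ.1.le, min_eq_left hθ.2.le]
  rw [hp, hagree (r,θ) ⟨hr, hθ⟩]

/-- Stability of the interpolation operator: there is `C > 0`,
depending only on `Θ`, `N` and the partition, such that for every `u` twice
continuously differentiable on `[0,1] × [0,Θ]`,
`‖Πu‖²_{L²_r} + ‖∂_r Πu‖²_{L²_r} + ‖∂_θ Πu‖²_{L²_{1/r}}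
  ≤ C (‖u‖²_{L²_r} + ‖∂_r u‖²_{L²_r} + ‖∂_θ u‖²_{L²_{1/r}} + ‖∂_{rθ} u‖²_{L²_r})`
in `[0,∞]`. -/
theorem stmt5 (Θ : ℝ) (hΘ₀ : 0 < Θ) (hΘ₂ : Θ < 2 * π)
    (N : ℕ) (hN : 2 ≤ N) (t : ℕ → ℝ) (e : ℕ → ℝ → ℝ)
    (ht0 : t 0 = 0) (htN : t (N - 1) = Θ)
    (htmono : ∀ j, j + 1 < N → t j < t (j + 1))
    (hnode : ∀ i < N, ∀ j < N, e i (t j) = if i = j then 1 else 0)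
    (hlin : ∀ i < N, ∀ j, j + 1 < N → ∀ x ∈ Icc (t j) (t (j + 1)),
      e i x = e i (t j) + (e i (t (j + 1)) - e i (t j)) * (x - t j) / (t (j + 1) - t j)) :
    ∃ C > (0:ℝ), ∀ u : ℝ × ℝ → ℝ,
      ContDiffOn ℝ 2 u (Icc (0:ℝ) 1 ×ˢ Icc (0:ℝ) Θ) →
      wL2r Θ (interp N t e u) + wL2r Θ (pd1 (interp N t e u))
          + wL2invr Θ (pd2 (interp N t e u))
        ≤ ENNReal.ofReal C *
          (wL2r Θ u + wL2r Θ (pd1 u) + wL2invr Θ (pd2 u) + wL2r Θ (pd2 (pd1 u))) := by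
  classical
  have hrangene : (Finset.range (N-1)).Nonempty := ⟨0, by simp; omega⟩
  set hmin : ℝ := (Finset.range (N-1)).inf' hrangene (fun j => t (j+1) - t j) with hhmin
  have hmin_pos : 0 < hmin := by
    rw [hhmin, Finset.lt_inf'_iff]
    intro j hj
    have hj' : j + 1 < N := by have := Finset.mem_range.1 hj; omega
    linarith [htmono j hj']
  have hmin_le : ∀ j, j + 1 < N → hmin ≤ t (j+1) - t j := by
    intro j hj
    exact Finset.inf'_le _ (Finset.mem_range.2 (by omega))
  set K : ℝ := 1/Θ + 1 with hK
  have hKpos : 0 < K := by positivity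
  refine ⟨2*K*Θ + 2*K*Θ + Θ/hmin, by positivity, ?_⟩
  intro u hu
  set S : Set (ℝ × ℝ) := Icc (0:ℝ) 1 ×ˢ Icc (0:ℝ) Θ with hS
  have hSu : UniqueDiffOn ℝ S := (uniqueDiffOn_Icc one_pos).prod (uniqueDiffOn_Icc hΘ₀)
  have hScomp : IsCompact S := isCompact_Icc.prod isCompact_Icc
  set f1 := fderivWithin ℝ u S with hf1
  set f2 := fderivWithin ℝ f1 S with hf2
  have hf1c : ContinuousOn f1 S := hu.continuousOn_fderivWithin hSu (by norm_num)
  have hf1cd : ContDiffOn ℝ 1 f1 S := hu.fderivWithin hSu (by norm_num)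
  have hf2c : ContinuousOn f2 S := hf1cd.continuousOn_fderivWithin hSu (le_rfl)
  obtain ⟨M1, hM1⟩ := hScomp.exists_bound_of_continuousOn hf1c
  obtain ⟨M2, hM2⟩ := hScomp.exists_bound_of_continuousOn (f := f2) (by exact hf2c)
  have hv10 : ‖((1:ℝ),(0:ℝ))‖ = 1 := by simp [Prod.norm_def]
  have hv01 : ‖((0:ℝ),(1:ℝ))‖ = 1 := by simp [Prod.norm_def]
  have ht_mem : ∀ i, i < N → t i ∈ Icc (0:ℝ) Θ := by
    intro i hi
    constructor
    · rcases Nat.eq_zero_or_pos i with h | h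
      · subst h; rw [ht0]
      · rw [← ht0]; exact (tmono_lt htmono 0 i h hi).le
    · rcases eq_or_lt_of_le (by omega : i ≤ N - 1) with h | h
      · rw [← htN, h]
      · rw [← htN]; exact (tmono_lt htmono i (N-1) h (by omega)).le
  have hrIcc : ∀ {r : ℝ}, r ∈ Ioo (0:ℝ) 1 → r ∈ Icc (0:ℝ) 1 := fun h => ⟨h.1.le, h.2.le⟩
  have hpd1 : ∀ {r θ : ℝ}, r ∈ Ioo (0:ℝ) 1 → θ ∈ Icc (0:ℝ) Θ →
      pd1 u (r,θ) = f1 (r,θ) (1,0) := by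
    intro r θ hr hθ
    exact (slice1 hu hr hθ).deriv
  have hpd2 : ∀ {r θ : ℝ}, r ∈ Icc (0:ℝ) 1 → θ ∈ Ioo (0:ℝ) Θ →
      pd2 u (r,θ) = f1 (r,θ) (0,1) := by
    intro r θ hr hθ
    exact (slice2 hu hr hθ).deriv
  have hpd12 : ∀ {r θ : ℝ}, r ∈ Ioo (0:ℝ) 1 → θ ∈ Ioo (0:ℝ) Θ →
      pd2 (pd1 u) (r,θ) = f2 (r,θ) (0,1) (1,0) := by
    intro r θ hr hθ
    have hev : (fun t' => pd1 u (r,t')) =ᶠ[nhds θ] (fun t' => f1 (r,t') (1,0)) := by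
      filter_upwards [Icc_mem_nhds hθ.1 hθ.2] with x hx
      exact hpd1 hr hx
    have heq : pd2 (pd1 u) (r,θ) = deriv (fun t' => f1 (r,t') (1,0)) θ := hev.deriv_eq
    rw [heq]
    exact (slice12 hΘ₀ hu (hrIcc hr) hθ).deriv
  have hcu : ∀ r ∈ Icc (0:ℝ) 1, ContinuousOn (fun s => u (r,s)) (Icc (0:ℝ) Θ) := by
    intro r hr
    exact hu.continuousOn.comp ((continuous_const.prodMk continuous_id).continuousOn)
      (fun s hs => ⟨hr, hs⟩)
  have hb2 : ∀ r ∈ Icc (0:ℝ) 1, ∀ x ∈ Ioo (0:ℝ) Θ, |pd2 u (r,x)| ≤ M1 := by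
    intro r hr x hx
    rw [hpd2 hr hx]
    calc |f1 (r,x) (0,1)| ≤ ‖f1 (r,x)‖ * ‖((0:ℝ),(1:ℝ))‖ := (f1 (r,x)).le_opNorm _
      _ ≤ M1 := by rw [hv01, mul_one]; exact hM1 _ ⟨hr, ⟨hx.1.le, hx.2.le⟩⟩
  have hb12 : ∀ r ∈ Ioo (0:ℝ) 1, ∀ x ∈ Ioo (0:ℝ) Θ, |pd2 (pd1 u) (r,x)| ≤ M2 := by
    intro r hr x hx
    rw [hpd12 hr hx]
    have hmem : ((r:ℝ),x) ∈ S := ⟨hrIcc hr, ⟨hx.1.le, hx.2.le⟩⟩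
    calc |f2 (r,x) (0,1) (1,0)| ≤ ‖f2 (r,x) (0,1)‖ * ‖((1:ℝ),(0:ℝ))‖ :=
          (f2 (r,x) (0,1)).le_opNorm _
      _ ≤ (‖f2 (r,x)‖ * ‖((0:ℝ),(1:ℝ))‖) * ‖((1:ℝ),(0:ℝ))‖ := by
          gcongr; exact (f2 (r,x)).le_opNorm _
      _ ≤ M2 := by rw [hv01, hv10, mul_one, mul_one]; exact hM2 _ hmem
  have hder2 : ∀ r ∈ Icc (0:ℝ) 1, ∀ x ∈ Ioo (0:ℝ) Θ,
      HasDerivAt (fun s => u (r,s)) (pd2 u (r,x)) x := by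
    intro r hr x hx
    rw [hpd2 hr hx]
    exact slice2 hu hr hx
  have hder12 : ∀ r ∈ Ioo (0:ℝ) 1, ∀ x ∈ Ioo (0:ℝ) Θ,
      HasDerivAt (fun s => pd1 u (r,s)) (pd2 (pd1 u) (r,x)) x := by
    intro r hr x hx
    rw [hpd12 hr hx]
    apply (slice12 hΘ₀ hu (hrIcc hr) hx).congr_of_eventuallyEq
    filter_upwards [Icc_mem_nhds hx.1 hx.2] with y hy
    exact hpd1 hr hy
  have hm2 : ∀ r : ℝ, Measurable (fun x => pd2 u (r,x)) := by
    intro r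
    exact measurable_deriv (fun t' => u (r, t'))
  have hm12 : ∀ r : ℝ, Measurable (fun x => pd2 (pd1 u) (r,x)) := by
    intro r
    exact measurable_deriv (fun t' => pd1 u (r, t'))
  have hcp1 : ∀ r ∈ Ioo (0:ℝ) 1, ContinuousOn (fun s => pd1 u (r,s)) (Icc (0:ℝ) Θ) := by
    intro r hr
    have h1 : ContinuousOn (fun s : ℝ => f1 (r,s)) (Icc (0:ℝ) Θ) :=
      hf1c.comp ((continuous_const.prodMk continuous_id).continuousOn)
        (fun s hs => ⟨hrIcc hr, hs⟩)
    have hc : ContinuousOn (fun s => f1 (r,s) (1,0)) (Icc (0:ℝ) Θ) :=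
      (ContinuousLinearMap.apply ℝ ℝ ((1:ℝ),(0:ℝ))).continuous.comp_continuousOn h1
    exact hc.congr fun s hs => hpd1 hr hs
  -- real slice integrals
  set Iu : ℝ → ℝ := fun r => ∫ s in Ioo (0:ℝ) Θ, (u (r,s))^2 with hIudef
  set Id2 : ℝ → ℝ := fun r => ∫ s in Ioo (0:ℝ) Θ, (pd2 u (r,s))^2 with hId2def
  set Ip : ℝ → ℝ := fun r => ∫ s in Ioo (0:ℝ) Θ, (pd1 u (r,s))^2 with hIpdef
  set Ipd : ℝ → ℝ := fun r => ∫ s in Ioo (0:ℝ) Θ, (pd2 (pd1 u) (r,s))^2 with hIpddef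
  have hIu_int : ∀ r ∈ Icc (0:ℝ) 1, IntegrableOn (fun s => (u (r,s))^2) (Ioo (0:ℝ) Θ) := by
    intro r hr
    exact (((hcu r hr).pow 2).integrableOn_Icc).mono_set Ioo_subset_Icc_self
  have hId_int : ∀ r ∈ Icc (0:ℝ) 1, IntegrableOn (fun s => (pd2 u (r,s))^2) (Ioo (0:ℝ) Θ) :=
    fun r hr => bddIntOn_sq (hm2 r) (hb2 r hr)
  have hd2_int : ∀ r ∈ Icc (0:ℝ) 1, IntegrableOn (fun s => pd2 u (r,s)) (Ioo (0:ℝ) Θ) :=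
    fun r hr => bddIntOn (hm2 r) (hb2 r hr)
  have hIp_int : ∀ r ∈ Ioo (0:ℝ) 1, IntegrableOn (fun s => (pd1 u (r,s))^2) (Ioo (0:ℝ) Θ) := by
    intro r hr
    exact (((hcp1 r hr).pow 2).integrableOn_Icc).mono_set Ioo_subset_Icc_self
  have hIpd_int : ∀ r ∈ Ioo (0:ℝ) 1,
      IntegrableOn (fun s => (pd2 (pd1 u) (r,s))^2) (Ioo (0:ℝ) Θ) :=
    fun r hr => bddIntOn_sq (hm12 r) (hb12 r hr)
  have hId_nonneg : ∀ r : ℝ, 0 ≤ Id2 r := fun r => integral_nonneg fun s => sq_nonneg _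
  have hIu_nonneg : ∀ r : ℝ, 0 ≤ Iu r := fun r => integral_nonneg fun s => sq_nonneg _
  -- trace inequalities
  have trace1 : ∀ r ∈ Icc (0:ℝ) 1, ∀ i, i < N → (u (r, t i))^2 ≤ K * (Iu r + Id2 r) := by
    intro r hr i hi
    have := trace_ineq hΘ₀ (hcu r hr) (hder2 r hr) (hm2 r) (hb2 r hr) (ht_mem i hi)
    simpa [hK, hIudef, hId2def] using this
  have trace2 : ∀ r ∈ Ioo (0:ℝ) 1, ∀ i, i < N → (pd1 u (r, t i))^2 ≤ K * (Ip r + Ipd r) := by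
    intro r hr i hi
    have := trace_ineq hΘ₀ (hcp1 r hr) (hder12 r hr) (hm12 r) (hb12 r hr) (ht_mem i hi)
    simpa [hK, hIpdef, hIpddef] using this
  -- ENNReal inner integrals
  set Ar : ℝ → ENNReal := fun r => ∫⁻ θ in Ioo (0:ℝ) Θ, ENNReal.ofReal ((u (r,θ))^2 * r)
    with hArdef
  set Ar2 : ℝ → ENNReal := fun r => ∫⁻ θ in Ioo (0:ℝ) Θ, ENNReal.ofReal ((pd1 u (r,θ))^2 * r)
    with hAr2def
  set Dr : ℝ → ENNReal := fun r => ∫⁻ θ in Ioo (0:ℝ) Θ, ENNReal.ofReal ((pd2 u (r,θ))^2 / r)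
    with hDrdef
  set Er : ℝ → ENNReal := fun r =>
      ∫⁻ θ in Ioo (0:ℝ) Θ, ENNReal.ofReal ((pd2 (pd1 u) (r,θ))^2 * r) with hErdef
  have cAu : ∀ r ∈ Ioo (0:ℝ) 1, ENNReal.ofReal (Iu r * r) = Ar r := by
    intro r hr
    rw [hArdef, hIudef]
    simp only
    rw [← MeasureTheory.integral_mul_const]
    exact ofReal_integral_eq_lintegral_ofReal ((hIu_int r (hrIcc hr)).mul_const r)
      (Filter.Eventually.of_forall fun s => mul_nonneg (sq_nonneg _) hr.1.le)
  have cIp : ∀ r ∈ Ioo (0:ℝ) 1, ENNReal.ofReal (Ip r * r) = Ar2 r := by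
    intro r hr
    rw [hAr2def, hIpdef]
    simp only
    rw [← MeasureTheory.integral_mul_const]
    exact ofReal_integral_eq_lintegral_ofReal ((hIp_int r hr).mul_const r)
      (Filter.Eventually.of_forall fun s => mul_nonneg (sq_nonneg _) hr.1.le)
  have cIpd : ∀ r ∈ Ioo (0:ℝ) 1, ENNReal.ofReal (Ipd r * r) = Er r := by
    intro r hr
    rw [hErdef, hIpddef]
    simp only
    rw [← MeasureTheory.integral_mul_const]
    exact ofReal_integral_eq_lintegral_ofReal ((hIpd_int r hr).mul_const r)
      (Filter.Eventually.of_forall fun s => mul_nonneg (sq_nonneg _) hr.1.le)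
  have cD : ∀ r ∈ Ioo (0:ℝ) 1, ENNReal.ofReal (Id2 r / r) = Dr r := by
    intro r hr
    rw [hDrdef, hId2def]
    simp only
    rw [← MeasureTheory.integral_div]
    exact ofReal_integral_eq_lintegral_ofReal ((hId_int r (hrIcc hr)).div_const r)
      (Filter.Eventually.of_forall fun s => div_nonneg (sq_nonneg _) hr.1.le)
  have cId_le : ∀ r ∈ Ioo (0:ℝ) 1, ENNReal.ofReal (Id2 r * r) ≤ Dr r := by
    intro r hr
    have h1r : r ≤ 1 / r := by
      rw [le_div_iff₀ hr.1]
      nlinarith [hr.1, hr.2]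
    calc ENNReal.ofReal (Id2 r * r) ≤ ENNReal.ofReal (Id2 r / r) := by
          apply ENNReal.ofReal_le_ofReal
          calc Id2 r * r ≤ Id2 r * (1/r) := by
                exact mul_le_mul_of_nonneg_left h1r (hId_nonneg r)
            _ = Id2 r / r := by rw [mul_one_div]
      _ = Dr r := cD r hr
  -- a.e. theta avoids the nodes
  have hnodes : ∀ᵐ θ ∂(volume.restrict (Ioo (0:ℝ) Θ)),
      θ ∈ Ioo (0:ℝ) Θ ∧ ∀ k, k < N → t k ≠ θ := by
    have h1 : volume (↑((Finset.range N).image t) : Set ℝ) = 0 :=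
      Set.Finite.measure_zero (Finset.finite_toSet _) _
    have h2 : ∀ᵐ θ ∂volume, θ ∉ (↑((Finset.range N).image t) : Set ℝ) :=
      measure_eq_zero_iff_ae_notMem.mp h1
    have h2' := ae_restrict_of_ae (s := Ioo (0:ℝ) Θ) h2
    filter_upwards [ae_restrict_mem measurableSet_Ioo, h2'] with θ h hnm
    refine ⟨h, fun k hk hkq => hnm ?_⟩
    exact Finset.mem_coe.2 (Finset.mem_image.2 ⟨k, Finset.mem_range.2 hk, hkq⟩)
  -- interpolant formulas
  have hinterp_val : ∀ (r' θ : ℝ) (j : ℕ), j + 1 < N → θ ∈ Icc (t j) (t (j+1)) →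
      interp N t e u (r',θ)
        = u (r', t j) * (1 - (θ - t j)/(t (j+1) - t j))
          + u (r', t (j+1)) * ((θ - t j)/(t (j+1) - t j)) := by
    intro r' θ j hj hθ
    simp only [interp]
    exact sum_eval hN hnode hlin hj hθ (fun i => u (r', t i))
  have hpd1interp : ∀ {r θ : ℝ}, r ∈ Ioo (0:ℝ) 1 → ∀ {j : ℕ}, j + 1 < N →
      θ ∈ Icc (t j) (t (j+1)) →
      pd1 (interp N t e u) (r,θ)
        = pd1 u (r, t j) * (1 - (θ - t j)/(t (j+1) - t j))
          + pd1 u (r, t (j+1)) * ((θ - t j)/(t (j+1) - t j)) := by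
    intro r θ hr j hj hθ
    have hfun : (fun s => interp N t e u (s,θ))
        = fun s => u (s, t j) * (1 - (θ - t j)/(t (j+1) - t j))
          + u (s, t (j+1)) * ((θ - t j)/(t (j+1) - t j)) := by
      funext s; exact hinterp_val s θ j hj hθ
    have hda : HasDerivAt (fun s => u (s, t j)) (f1 (r, t j) (1,0)) r :=
      slice1 hu hr (ht_mem j (by omega))
    have hdb : HasDerivAt (fun s => u (s, t (j+1))) (f1 (r, t (j+1)) (1,0)) r :=
      slice1 hu hr (ht_mem _ hj)
    have hd : HasDerivAt (fun s => interp N t e u (s,θ))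
        (f1 (r,t j) (1,0) * (1 - (θ - t j)/(t (j+1) - t j))
          + f1 (r,t (j+1)) (1,0) * ((θ - t j)/(t (j+1) - t j))) r := by
      rw [hfun]; exact (hda.mul_const _).add (hdb.mul_const _)
    rw [hpd1 hr (ht_mem j (by omega)), hpd1 hr (ht_mem _ hj)]
    exact hd.deriv
  have hpd2interp : ∀ (r : ℝ) {θ : ℝ} {j : ℕ}, j + 1 < N → θ ∈ Ioo (t j) (t (j+1)) →
      pd2 (interp N t e u) (r,θ)
        = (u (r, t (j+1)) - u (r, t j)) / (t (j+1) - t j) := by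
    intro r θ j hj hθ
    have hjj := htmono j hj
    have hev : (fun θ' => interp N t e u (r,θ')) =ᶠ[nhds θ]
        (fun θ' => u (r, t j) + (u (r, t (j+1)) - u (r, t j)) * (θ' - t j) / (t (j+1) - t j)) := by
      filter_upwards [Ioo_mem_nhds hθ.1 hθ.2] with x hx
      rw [hinterp_val r x j hj ⟨hx.1.le, hx.2.le⟩]
      field_simp
      ring
    have hg : HasDerivAt
        (fun θ' : ℝ => u (r, t j) + (u (r, t (j+1)) - u (r, t j)) * (θ' - t j) / (t (j+1) - t j))
        ((u (r, t (j+1)) - u (r, t j)) / (t (j+1) - t j)) θ := by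
      have h1 : HasDerivAt (fun θ' : ℝ => θ' - t j) 1 θ := (hasDerivAt_id θ).sub_const _
      have h2 := (h1.const_mul (u (r, t (j+1)) - u (r, t j))).div_const (t (j+1) - t j)
      simpa using h2.const_add (u (r, t j))
    have heq : pd2 (interp N t e u) (r,θ)
        = deriv (fun θ' : ℝ => u (r, t j) + (u (r, t (j+1)) - u (r, t j)) * (θ' - t j) / (t (j+1) - t j)) θ :=
      hev.deriv_eq
    rw [heq, hg.deriv]
  -- slope bound
  have hslope : ∀ r ∈ Icc (0:ℝ) 1, ∀ {j : ℕ}, j + 1 < N →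
      ((u (r, t (j+1)) - u (r, t j)) / (t (j+1) - t j))^2 ≤ (1/hmin) * Id2 r := by
    intro r hr j hj
    have hjj := htmono j hj
    have h0j : 0 ≤ t j := (ht_mem j (by omega)).1
    have hj1Θ : t (j+1) ≤ Θ := (ht_mem _ hj).2
    have hdiff : u (r, t (j+1)) - u (r, t j) = ∫ s in Ioo (t j) (t (j+1)), pd2 u (r,s) :=
      ftc_diff h0j hjj.le hj1Θ (hcu r hr) (hder2 r hr) (hd2_int r hr)
    have hsub : IntegrableOn (fun s => pd2 u (r,s)) (Ioo (t j) (t (j+1))) :=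
      (hd2_int r hr).mono_set (Ioo_subset_Ioo h0j hj1Θ)
    have hsub2 : IntegrableOn (fun s => (pd2 u (r,s))^2) (Ioo (t j) (t (j+1))) :=
      (hId_int r hr).mono_set (Ioo_subset_Ioo h0j hj1Θ)
    have hcs := sq_setIntegral_le hjj hsub hsub2
    have hmono : (∫ s in Ioo (t j) (t (j+1)), (pd2 u (r,s))^2) ≤ Id2 r := by
      apply setIntegral_mono_set (hId_int r hr)
        ((ae_restrict_mem measurableSet_Ioo).mono fun s _ => sq_nonneg _)
        ((Ioo_subset_Ioo h0j hj1Θ).eventuallyLE)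
    have hh : (0:ℝ) < t (j+1) - t j := by linarith
    rw [hdiff, div_pow, div_le_iff₀ (pow_pos hh 2)]
    have hkey : (t (j+1) - t j) * Id2 r * hmin ≤ Id2 r * (t (j+1) - t j)^2 := by
      nlinarith [mul_nonneg (mul_nonneg (hId_nonneg r) hh.le)
        (by linarith [hmin_le j hj] : (0:ℝ) ≤ t (j+1) - t j - hmin)]
    calc (∫ s in Ioo (t j) (t (j+1)), pd2 u (r,s))^2
        ≤ (t (j+1) - t j) * (∫ s in Ioo (t j) (t (j+1)), (pd2 u (r,s))^2) := hcs
      _ ≤ (t (j+1) - t j) * Id2 r := mul_le_mul_of_nonneg_left hmono hh.le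
      _ = ((t (j+1) - t j) * Id2 r * hmin) / hmin := by field_simp
      _ ≤ (Id2 r * (t (j+1) - t j)^2) / hmin := by gcongr
      _ = 1/hmin * Id2 r * (t (j+1) - t j)^2 := by ring
  -- Main bound 1
  have B1 : wL2r Θ (interp N t e u)
      ≤ ENNReal.ofReal (2*K*Θ) * (wL2r Θ u + wL2invr Θ (pd2 u)) := by
    have hub : ∀ r ∈ Ioo (0:ℝ) 1,
        (∫⁻ θ in Ioo (0:ℝ) Θ, ENNReal.ofReal ((interp N t e u (r,θ))^2 * r))
          ≤ (ENNReal.ofReal (2*K) * (Ar r + Dr r)) * ENNReal.ofReal Θ := by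
      intro r hr
      have hb : ∀ᵐ θ ∂(volume.restrict (Ioo (0:ℝ) Θ)),
          ENNReal.ofReal ((interp N t e u (r,θ))^2 * r)
            ≤ ENNReal.ofReal (2*K) * (Ar r + Dr r) := by
        filter_upwards [hnodes] with θ hθ
        obtain ⟨hθI, hnd⟩ := hθ
        obtain ⟨j, hj, hj1, hj2⟩ := exists_seg hN ht0 htN htmono hθI hnd
        have hjj := htmono j hj
        have hl0 : 0 ≤ (θ - t j) / (t (j+1) - t j) := by
          apply div_nonneg <;> linarith
        have hl1 : (θ - t j) / (t (j+1) - t j) ≤ 1 := by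
          rw [div_le_one (by linarith)]; linarith
        have hsq : (interp N t e u (r,θ))^2 ≤ 2*K*(Iu r + Id2 r) := by
          rw [hinterp_val r θ j hj ⟨hj1.le, hj2.le⟩]
          calc (u (r,t j) * (1 - (θ - t j) / (t (j+1) - t j))
                + u (r,t (j+1)) * ((θ - t j) / (t (j+1) - t j)))^2
              ≤ (u (r,t j))^2 + (u (r,t (j+1)))^2 := convex_sq_bound _ _ _ hl0 hl1
            _ ≤ 2*K*(Iu r + Id2 r) := by
                have h1 := trace1 r (hrIcc hr) j (by omega)
                have h2 := trace1 r (hrIcc hr) (j+1) hj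
                linarith
        calc ENNReal.ofReal ((interp N t e u (r,θ))^2 * r)
            ≤ ENNReal.ofReal (2*K * (Iu r * r + Id2 r * r)) := by
              apply ENNReal.ofReal_le_ofReal
              nlinarith [hsq, hr.1.le, sq_nonneg (interp N t e u (r,θ))]
          _ = ENNReal.ofReal (2*K) * ENNReal.ofReal (Iu r * r + Id2 r * r) := by
              rw [ENNReal.ofReal_mul (by positivity)]
          _ ≤ ENNReal.ofReal (2*K) * (ENNReal.ofReal (Iu r * r) + ENNReal.ofReal (Id2 r * r)) :=
              mul_le_mul_right ENNReal.ofReal_add_le _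
          _ ≤ ENNReal.ofReal (2*K) * (Ar r + Dr r) := by
              apply mul_le_mul_right
              rw [← cAu r hr]
              exact add_le_add le_rfl (cId_le r hr)
      calc (∫⁻ θ in Ioo (0:ℝ) Θ, ENNReal.ofReal ((interp N t e u (r,θ))^2 * r))
          ≤ ∫⁻ _ in Ioo (0:ℝ) Θ, ENNReal.ofReal (2*K) * (Ar r + Dr r) := lintegral_mono_ae hb
        _ = (ENNReal.ofReal (2*K) * (Ar r + Dr r)) * ENNReal.ofReal Θ := by
            rw [setLIntegral_const, Real.volume_Ioo, sub_zero]
    have hA_meas : AEMeasurable Ar (volume.restrict (Ioo (0:ℝ) 1)) := by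
      rw [hArdef]
      exact aemeas_inner hΘ₀ hu.continuousOn (fun p hp => rfl)
    calc wL2r Θ (interp N t e u)
        ≤ ∫⁻ r in Ioo (0:ℝ) 1, (ENNReal.ofReal (2*K) * (Ar r + Dr r)) * ENNReal.ofReal Θ := by
          unfold wL2r
          apply lintegral_mono_ae
          filter_upwards [ae_restrict_mem measurableSet_Ioo] with r hr
          exact hub r hr
      _ = ∫⁻ r in Ioo (0:ℝ) 1, (ENNReal.ofReal (2*K) * ENNReal.ofReal Θ) * (Ar r + Dr r) := by
          congr 1; funext r; ring
      _ = (ENNReal.ofReal (2*K) * ENNReal.ofReal Θ) * ∫⁻ r in Ioo (0:ℝ) 1, (Ar r + Dr r) :=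
          lintegral_const_mul' _ _ (ENNReal.mul_ne_top ENNReal.ofReal_ne_top ENNReal.ofReal_ne_top)
      _ = (ENNReal.ofReal (2*K) * ENNReal.ofReal Θ)
            * ((∫⁻ r in Ioo (0:ℝ) 1, Ar r) + ∫⁻ r in Ioo (0:ℝ) 1, Dr r) := by
          rw [lintegral_add_left' hA_meas]
      _ = ENNReal.ofReal (2*K*Θ) * (wL2r Θ u + wL2invr Θ (pd2 u)) := by
          rw [← ENNReal.ofReal_mul (by positivity)]
          rfl
  -- Main bound 2
  have B2 : wL2r Θ (pd1 (interp N t e u))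
      ≤ ENNReal.ofReal (2*K*Θ) * (wL2r Θ (pd1 u) + wL2r Θ (pd2 (pd1 u))) := by
    have hub : ∀ r ∈ Ioo (0:ℝ) 1,
        (∫⁻ θ in Ioo (0:ℝ) Θ, ENNReal.ofReal ((pd1 (interp N t e u) (r,θ))^2 * r))
          ≤ (ENNReal.ofReal (2*K) * (Ar2 r + Er r)) * ENNReal.ofReal Θ := by
      intro r hr
      have hb : ∀ᵐ θ ∂(volume.restrict (Ioo (0:ℝ) Θ)),
          ENNReal.ofReal ((pd1 (interp N t e u) (r,θ))^2 * r)
            ≤ ENNReal.ofReal (2*K) * (Ar2 r + Er r) := by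
        filter_upwards [hnodes] with θ hθ
        obtain ⟨hθI, hnd⟩ := hθ
        obtain ⟨j, hj, hj1, hj2⟩ := exists_seg hN ht0 htN htmono hθI hnd
        have hjj := htmono j hj
        have hl0 : 0 ≤ (θ - t j) / (t (j+1) - t j) := by
          apply div_nonneg <;> linarith
        have hl1 : (θ - t j) / (t (j+1) - t j) ≤ 1 := by
          rw [div_le_one (by linarith)]; linarith
        have hsq : (pd1 (interp N t e u) (r,θ))^2 ≤ 2*K*(Ip r + Ipd r) := by
          rw [hpd1interp hr hj ⟨hj1.le, hj2.le⟩]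
          calc (pd1 u (r,t j) * (1 - (θ - t j) / (t (j+1) - t j))
                + pd1 u (r,t (j+1)) * ((θ - t j) / (t (j+1) - t j)))^2
              ≤ (pd1 u (r,t j))^2 + (pd1 u (r,t (j+1)))^2 := convex_sq_bound _ _ _ hl0 hl1
            _ ≤ 2*K*(Ip r + Ipd r) := by
                have h1 := trace2 r hr j (by omega)
                have h2 := trace2 r hr (j+1) hj
                linarith
        calc ENNReal.ofReal ((pd1 (interp N t e u) (r,θ))^2 * r)
            ≤ ENNReal.ofReal (2*K * (Ip r * r + Ipd r * r)) := by
              apply ENNReal.ofReal_le_ofReal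
              nlinarith [hsq, hr.1.le, sq_nonneg (pd1 (interp N t e u) (r,θ))]
          _ = ENNReal.ofReal (2*K) * ENNReal.ofReal (Ip r * r + Ipd r * r) := by
              rw [ENNReal.ofReal_mul (by positivity)]
          _ ≤ ENNReal.ofReal (2*K) * (ENNReal.ofReal (Ip r * r) + ENNReal.ofReal (Ipd r * r)) :=
              mul_le_mul_right ENNReal.ofReal_add_le _
          _ = ENNReal.ofReal (2*K) * (Ar2 r + Er r) := by
              rw [cIp r hr, cIpd r hr]
      calc (∫⁻ θ in Ioo (0:ℝ) Θ, ENNReal.ofReal ((pd1 (interp N t e u) (r,θ))^2 * r))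
          ≤ ∫⁻ _ in Ioo (0:ℝ) Θ, ENNReal.ofReal (2*K) * (Ar2 r + Er r) := lintegral_mono_ae hb
        _ = (ENNReal.ofReal (2*K) * (Ar2 r + Er r)) * ENNReal.ofReal Θ := by
            rw [setLIntegral_const, Real.volume_Ioo, sub_zero]
    have hA_meas : AEMeasurable Ar2 (volume.restrict (Ioo (0:ℝ) 1)) := by
      rw [hAr2def]
      refine aemeas_inner hΘ₀ (g := fun p => f1 p (1,0)) ?_ ?_
      · exact (ContinuousLinearMap.apply ℝ ℝ ((1:ℝ),(0:ℝ))).continuous.comp_continuousOn hf1c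
      · intro p hp
        have : p = (p.1, p.2) := rfl
        rw [this]
        exact hpd1 hp.1 ⟨hp.2.1.le, hp.2.2.le⟩
    calc wL2r Θ (pd1 (interp N t e u))
        ≤ ∫⁻ r in Ioo (0:ℝ) 1, (ENNReal.ofReal (2*K) * (Ar2 r + Er r)) * ENNReal.ofReal Θ := by
          unfold wL2r
          apply lintegral_mono_ae
          filter_upwards [ae_restrict_mem measurableSet_Ioo] with r hr
          exact hub r hr
      _ = ∫⁻ r in Ioo (0:ℝ) 1, (ENNReal.ofReal (2*K) * ENNReal.ofReal Θ) * (Ar2 r + Er r) := by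
          congr 1; funext r; ring
      _ = (ENNReal.ofReal (2*K) * ENNReal.ofReal Θ) * ∫⁻ r in Ioo (0:ℝ) 1, (Ar2 r + Er r) :=
          lintegral_const_mul' _ _ (ENNReal.mul_ne_top ENNReal.ofReal_ne_top ENNReal.ofReal_ne_top)
      _ = (ENNReal.ofReal (2*K) * ENNReal.ofReal Θ)
            * ((∫⁻ r in Ioo (0:ℝ) 1, Ar2 r) + ∫⁻ r in Ioo (0:ℝ) 1, Er r) := by
          rw [lintegral_add_left' hA_meas]
      _ = ENNReal.ofReal (2*K*Θ) * (wL2r Θ (pd1 u) + wL2r Θ (pd2 (pd1 u))) := by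
          rw [← ENNReal.ofReal_mul (by positivity)]
          rfl
  -- Main bound 3
  have B3 : wL2invr Θ (pd2 (interp N t e u))
      ≤ ENNReal.ofReal (Θ/hmin) * wL2invr Θ (pd2 u) := by
    have hub : ∀ r ∈ Ioo (0:ℝ) 1,
        (∫⁻ θ in Ioo (0:ℝ) Θ, ENNReal.ofReal ((pd2 (interp N t e u) (r,θ))^2 / r))
          ≤ (ENNReal.ofReal (1/hmin) * Dr r) * ENNReal.ofReal Θ := by
      intro r hr
      have hb : ∀ᵐ θ ∂(volume.restrict (Ioo (0:ℝ) Θ)),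
          ENNReal.ofReal ((pd2 (interp N t e u) (r,θ))^2 / r)
            ≤ ENNReal.ofReal (1/hmin) * Dr r := by
        filter_upwards [hnodes] with θ hθ
        obtain ⟨hθI, hnd⟩ := hθ
        obtain ⟨j, hj, hj1, hj2⟩ := exists_seg hN ht0 htN htmono hθI hnd
        have hsq : (pd2 (interp N t e u) (r,θ))^2 ≤ (1/hmin) * Id2 r := by
          rw [hpd2interp r hj ⟨hj1, hj2⟩]
          exact hslope r (hrIcc hr) hj
        calc ENNReal.ofReal ((pd2 (interp N t e u) (r,θ))^2 / r)
            ≤ ENNReal.ofReal ((1/hmin) * (Id2 r / r)) := by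
              apply ENNReal.ofReal_le_ofReal
              rw [← mul_div_assoc]
              gcongr
              exact hr.1.le
          _ = ENNReal.ofReal (1/hmin) * ENNReal.ofReal (Id2 r / r) := by
              rw [ENNReal.ofReal_mul (by positivity)]
          _ = ENNReal.ofReal (1/hmin) * Dr r := by rw [cD r hr]
      calc (∫⁻ θ in Ioo (0:ℝ) Θ, ENNReal.ofReal ((pd2 (interp N t e u) (r,θ))^2 / r))
          ≤ ∫⁻ _ in Ioo (0:ℝ) Θ, ENNReal.ofReal (1/hmin) * Dr r := lintegral_mono_ae hb
        _ = (ENNReal.ofReal (1/hmin) * Dr r) * ENNReal.ofReal Θ := by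
            rw [setLIntegral_const, Real.volume_Ioo, sub_zero]
    calc wL2invr Θ (pd2 (interp N t e u))
        ≤ ∫⁻ r in Ioo (0:ℝ) 1, (ENNReal.ofReal (1/hmin) * ENNReal.ofReal Θ) * Dr r := by
          unfold wL2invr
          apply lintegral_mono_ae
          filter_upwards [ae_restrict_mem measurableSet_Ioo] with r hr
          calc (∫⁻ θ in Ioo (0:ℝ) Θ, ENNReal.ofReal ((pd2 (interp N t e u) (r,θ))^2 / r))
              ≤ (ENNReal.ofReal (1/hmin) * Dr r) * ENNReal.ofReal Θ := hub r hr
            _ = (ENNReal.ofReal (1/hmin) * ENNReal.ofReal Θ) * Dr r := by ring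
      _ = (ENNReal.ofReal (1/hmin) * ENNReal.ofReal Θ) * ∫⁻ r in Ioo (0:ℝ) 1, Dr r :=
          lintegral_const_mul' _ _ (ENNReal.mul_ne_top ENNReal.ofReal_ne_top ENNReal.ofReal_ne_top)
      _ = ENNReal.ofReal (Θ/hmin) * wL2invr Θ (pd2 u) := by
          rw [← ENNReal.ofReal_mul (by positivity), one_div,
            show hmin⁻¹ * Θ = Θ / hmin from by rw [div_eq_mul_inv, mul_comm]]
          rfl
  -- assemble
  set R : ENNReal := wL2r Θ u + wL2r Θ (pd1 u) + wL2invr Θ (pd2 u) + wL2r Θ (pd2 (pd1 u)) with hR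
  have hR1 : wL2r Θ u + wL2invr Θ (pd2 u) ≤ R := by
    rw [hR]
    calc wL2r Θ u + wL2invr Θ (pd2 u)
        ≤ (wL2r Θ u + wL2r Θ (pd1 u)) + (wL2invr Θ (pd2 u) + wL2r Θ (pd2 (pd1 u))) :=
          add_le_add le_self_add le_self_add
      _ = wL2r Θ u + wL2r Θ (pd1 u) + wL2invr Θ (pd2 u) + wL2r Θ (pd2 (pd1 u)) := by ring
  have hR2 : wL2r Θ (pd1 u) + wL2r Θ (pd2 (pd1 u)) ≤ R := by
    rw [hR]
    calc wL2r Θ (pd1 u) + wL2r Θ (pd2 (pd1 u))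
        ≤ (wL2r Θ u + wL2r Θ (pd1 u)) + (wL2invr Θ (pd2 u) + wL2r Θ (pd2 (pd1 u))) :=
          add_le_add le_add_self le_add_self
      _ = wL2r Θ u + wL2r Θ (pd1 u) + wL2invr Θ (pd2 u) + wL2r Θ (pd2 (pd1 u)) := by ring
  have hR3 : wL2invr Θ (pd2 u) ≤ R := by
    rw [hR]
    calc wL2invr Θ (pd2 u) ≤ wL2invr Θ (pd2 u) + wL2r Θ (pd2 (pd1 u)) := le_self_add
      _ ≤ (wL2r Θ u + wL2r Θ (pd1 u)) + (wL2invr Θ (pd2 u) + wL2r Θ (pd2 (pd1 u))) := le_add_self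
      _ = wL2r Θ u + wL2r Θ (pd1 u) + wL2invr Θ (pd2 u) + wL2r Θ (pd2 (pd1 u)) := by ring
  calc wL2r Θ (interp N t e u) + wL2r Θ (pd1 (interp N t e u))
        + wL2invr Θ (pd2 (interp N t e u))
      ≤ (ENNReal.ofReal (2*K*Θ) * R + ENNReal.ofReal (2*K*Θ) * R)
        + ENNReal.ofReal (Θ/hmin) * R := by
        refine add_le_add (add_le_add ?_ ?_) ?_
        · exact B1.trans (mul_le_mul_right hR1 _)
        · exact B2.trans (mul_le_mul_right hR2 _)
        · exact B3.trans (mul_le_mul_right hR3 _)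
    _ = (ENNReal.ofReal (2*K*Θ) + ENNReal.ofReal (2*K*Θ) + ENNReal.ofReal (Θ/hmin)) * R := by
        ring
    _ = ENNReal.ofReal (2*K*Θ + 2*K*Θ + Θ/hmin) * R := by
        rw [← ENNReal.ofReal_add (by positivity) (by positivity),
          ← ENNReal.ofReal_add (by positivity) (by positivity)]
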